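/- Let $g : [0,1] \to \mathbb{R}$ be continuous, set $\psi(\rho) = \max_{0 \le \sigma \le \rho}|g(\sigma)|$ and $\rho_0 = \sup(\{0\} \cup \{\rho \in [0,1] : g \equiv 0 \text{ on } [0,\rho]\})$, and define $\widehat G'(\rho) = \frac{2}{\rho}\int_0^\rho g(\sigma)\sigma\,d\sigma$ and $\widehat G''(\rho) = -\frac{1}{\rho}\widehat G'(\rho) + 2g(\rho)$ for $\rho \in (0,1]$. Then for all $\rho \in (0,1]$: (a) $|\widehat G'(\rho)| \le \psi(\rho)\,\frac{\rho^2 - \rho_0^2}{\rho}$, and (b) $\widehat G''(\rho)^2 + \left(\frac{\widehat G'(\rho)}{\rho}\right)^2 \le 10\,\psi(\rho)^2$. -/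

import Mathlib

/-- Lemma 4.3(iii): derivative estimates for the regular part of the radial potential:
`|Ĝ'(ρ)| ≤ ψ(ρ)(ρ² - ρ₀²)/ρ` and `Ĝ''(ρ)² + (Ĝ'(ρ)/ρ)² ≤ 10 ψ(ρ)²`. -/
theorem radial_potential_derivative_estimates (g : ℝ → ℝ)
    (hg : ContinuousOn g (Set.Icc 0 1))
    (ψ : ℝ → ℝ) (hψ : ∀ ρ, ψ ρ = sSup ((fun σ => |g σ|) '' Set.Icc 0 ρ))
    (ρ₀ : ℝ)
    (hρ₀ : ρ₀ = sSup ({0} ∪ {ρ | ρ ∈ Set.Icc (0:ℝ) 1 ∧ ∀ σ ∈ Set.Icc 0 ρ, g σ = 0}))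
    (G' G'' : ℝ → ℝ)
    (hG' : ∀ ρ, G' ρ = (2 / ρ) * ∫ σ in (0:ℝ)..ρ, g σ * σ)
    (hG'' : ∀ ρ, G'' ρ = -(1 / ρ) * G' ρ + 2 * g ρ) :
    ∀ ρ ∈ Set.Ioc (0:ℝ) 1,
      |G' ρ| ≤ ψ ρ * ((ρ ^ 2 - ρ₀ ^ 2) / ρ) ∧
      G'' ρ ^ 2 + (G' ρ / ρ) ^ 2 ≤ 10 * ψ ρ ^ 2 := by
  -- Basic facts about ρ₀
  set S : Set ℝ := {0} ∪ {ρ | ρ ∈ Set.Icc (0:ℝ) 1 ∧ ∀ σ ∈ Set.Icc 0 ρ, g σ = 0} with hS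
  have hS0 : (0:ℝ) ∈ S := Or.inl rfl
  have hSbdd : BddAbove S := by
    refine ⟨1, fun x hx => ?_⟩
    rcases hx with h | h
    · simp at h; simp [h]
    · exact h.1.2
  have hρ₀0 : 0 ≤ ρ₀ := hρ₀ ▸ le_csSup hSbdd hS0
  have hρ₀1 : ρ₀ ≤ 1 := by
    rw [hρ₀]
    refine csSup_le ⟨0, hS0⟩ fun x hx => ?_
    rcases hx with h | h
    · simp at h; simp [h]
    · exact h.1.2
  have hzero : ∀ σ : ℝ, 0 ≤ σ → σ < ρ₀ → g σ = 0 := by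
    intro σ hσ0 hσρ₀
    rw [hρ₀] at hσρ₀
    obtain ⟨s, hsS, hσs⟩ := exists_lt_of_lt_csSup ⟨0, hS0⟩ hσρ₀
    rcases hsS with h | h
    · simp at h; subst h; linarith
    · exact h.2 σ ⟨hσ0, hσs.le⟩
  have hgρ₀ : 0 < ρ₀ → g ρ₀ = 0 := by
    intro hpos
    have hc : Filter.Tendsto g (nhdsWithin ρ₀ (Set.Icc 0 1)) (nhds (g ρ₀)) :=
      hg ρ₀ ⟨hρ₀0, hρ₀1⟩
    have hsub : Set.Ico (0:ℝ) ρ₀ ⊆ Set.Icc 0 1 := fun x hx => ⟨hx.1, le_trans hx.2.le hρ₀1⟩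
    have h1 : Filter.Tendsto g (nhdsWithin ρ₀ (Set.Ico 0 ρ₀)) (nhds (g ρ₀)) :=
      hc.mono_left (nhdsWithin_mono _ hsub)
    have hne : (nhdsWithin ρ₀ (Set.Ico 0 ρ₀)).NeBot := by
      rw [← mem_closure_iff_nhdsWithin_neBot, closure_Ico (by linarith : (0:ℝ) ≠ ρ₀)]
      exact ⟨hρ₀0, le_refl _⟩
    have h2 : Filter.Tendsto g (nhdsWithin ρ₀ (Set.Ico 0 ρ₀)) (nhds 0) := by
      refine Filter.Tendsto.congr' ?_ tendsto_const_nhds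
      filter_upwards [self_mem_nhdsWithin] with σ hσ using (hzero σ hσ.1 hσ.2).symm
    exact tendsto_nhds_unique h1 h2
  -- now fix ρ
  intro ρ hρ
  obtain ⟨hρpos, hρ1⟩ := hρ
  have hsubρ : Set.Icc (0:ℝ) ρ ⊆ Set.Icc 0 1 := fun x hx => ⟨hx.1, le_trans hx.2 hρ1⟩
  -- facts about ψ ρ
  have hbddψ : BddAbove ((fun σ => |g σ|) '' Set.Icc 0 ρ) :=
    (isCompact_Icc.image_of_continuousOn ((hg.mono hsubρ).abs)).bddAbove
  have himg : ∀ σ ∈ Set.Icc (0:ℝ) ρ, |g σ| ≤ ψ ρ := by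
    intro σ hσ
    rw [hψ]
    exact le_csSup hbddψ ⟨σ, hσ, rfl⟩
  have hψ0 : 0 ≤ ψ ρ := le_trans (abs_nonneg (g 0)) (himg 0 ⟨le_refl 0, hρpos.le⟩)
  -- the integral bound with m = min ρ₀ ρ
  set m : ℝ := min ρ₀ ρ with hm
  have hm0 : 0 ≤ m := le_min hρ₀0 hρpos.le
  have hmρ : m ≤ ρ := min_le_right _ _
  have hmρ₀ : m ≤ ρ₀ := min_le_left _ _
  have hintg : ∀ a b : ℝ, 0 ≤ a → a ≤ b → b ≤ 1 →
      IntervalIntegrable (fun σ => g σ * σ) MeasureTheory.volume a b := by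
    intro a b ha hab hb1
    apply ContinuousOn.intervalIntegrable
    apply ContinuousOn.mul (hg.mono ?_) continuousOn_id
    rw [Set.uIcc_of_le hab]
    exact fun x hx => ⟨le_trans ha hx.1, le_trans hx.2 hb1⟩
  have hsplit : (∫ σ in (0:ℝ)..ρ, g σ * σ) = ∫ σ in m..ρ, g σ * σ := by
    have h0 : (∫ σ in (0:ℝ)..m, g σ * σ) = 0 := by
      rcases eq_or_lt_of_le hm0 with h | h
      · rw [← h, intervalIntegral.integral_same]
      · have hgz : ∀ σ ∈ Set.Icc (0:ℝ) m, g σ = 0 := by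
          intro σ hσ
          rcases lt_or_eq_of_le (le_trans hσ.2 hmρ₀) with h' | h'
          · exact hzero σ hσ.1 h'
          · rw [h']; exact hgρ₀ (lt_of_lt_of_le h hmρ₀)
        have : (∫ σ in (0:ℝ)..m, g σ * σ) = ∫ σ in (0:ℝ)..m, (0:ℝ) := by
          apply intervalIntegral.integral_congr
          intro σ hσ
          rw [Set.uIcc_of_le hm0] at hσ
          simp [hgz σ hσ]
        rw [this, intervalIntegral.integral_zero]
    have hadd := intervalIntegral.integral_add_adjacent_intervals
      (hintg 0 m le_rfl hm0 (le_trans hmρ hρ1)) (hintg m ρ hm0 hmρ hρ1)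
    rw [← hadd, h0, zero_add]
  have hbound : |∫ σ in m..ρ, g σ * σ| ≤ ψ ρ * ((ρ ^ 2 - m ^ 2) / 2) := by
    have hint1 : IntervalIntegrable (fun σ => |g σ * σ|) MeasureTheory.volume m ρ :=
      (hintg m ρ hm0 hmρ hρ1).abs
    have hint2 : IntervalIntegrable (fun σ => ψ ρ * σ) MeasureTheory.volume m ρ :=
      (continuous_const.mul continuous_id).intervalIntegrable m ρ
    have h1 : |∫ σ in m..ρ, g σ * σ| ≤ ∫ σ in m..ρ, |g σ * σ| :=
      intervalIntegral.abs_integral_le_integral_abs hmρ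
    have h2 : (∫ σ in m..ρ, |g σ * σ|) ≤ ∫ σ in m..ρ, ψ ρ * σ := by
      apply intervalIntegral.integral_mono_on hmρ hint1 hint2
      intro σ hσ
      have hσ0 : 0 ≤ σ := le_trans hm0 hσ.1
      rw [abs_mul, abs_of_nonneg hσ0]
      exact mul_le_mul_of_nonneg_right (himg σ ⟨hσ0, hσ.2⟩) hσ0
    have h3 : (∫ σ in m..ρ, ψ ρ * σ) = ψ ρ * ((ρ ^ 2 - m ^ 2) / 2) := by
      rw [intervalIntegral.integral_const_mul, integral_id]
    linarith
  have hG'bound : |G' ρ| ≤ ψ ρ * ((ρ ^ 2 - m ^ 2) / ρ) := by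
    rw [hG', hsplit, abs_mul, abs_of_pos (by positivity : (0:ℝ) < 2 / ρ)]
    calc 2 / ρ * |∫ σ in m..ρ, g σ * σ| ≤ 2 / ρ * (ψ ρ * ((ρ ^ 2 - m ^ 2) / 2)) :=
          mul_le_mul_of_nonneg_left hbound (by positivity)
      _ = ψ ρ * ((ρ ^ 2 - m ^ 2) / ρ) := by field_simp
  constructor
  · -- part (a)
    rcases le_or_gt ρ₀ ρ with h | h
    · have : m = ρ₀ := min_eq_left h
      rw [← this]; exact hG'bound
    · -- ρ < ρ₀ : ψ ρ = 0 and m = ρ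
      have hmρ' : m = ρ := min_eq_right h.le
      have hψz : ψ ρ = 0 := by
        refine le_antisymm ?_ hψ0
        rw [hψ]
        refine csSup_le ⟨|g 0|, 0, ⟨le_refl 0, hρpos.le⟩, rfl⟩ ?_
        rintro y ⟨σ, hσ, rfl⟩
        simp only [hzero σ hσ.1 (lt_of_le_of_lt hσ.2 h), abs_zero, le_refl]
      rw [hψz, zero_mul]
      have := hG'bound
      rw [hmρ', hψz, zero_mul] at this
      linarith [abs_nonneg (G' ρ)]
  · -- part (b)
    have hb0 : |G' ρ| ≤ ψ ρ * ρ := by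
      refine le_trans hG'bound ?_
      have h4 : (ρ ^ 2 - m ^ 2) / ρ ≤ ρ := by
        rw [div_le_iff₀ hρpos]
        nlinarith [sq_nonneg m]
      exact mul_le_mul_of_nonneg_left h4 hψ0
    have hb1 : |G' ρ / ρ| ≤ ψ ρ := by
      rw [abs_div, abs_of_pos hρpos, div_le_iff₀ hρpos]
      linarith
    have hgρ : |g ρ| ≤ ψ ρ := himg ρ ⟨hρpos.le, le_refl ρ⟩
    have hb2 : |G'' ρ| ≤ 3 * ψ ρ := by
      rw [hG'']
      have heq : -(1 / ρ) * G' ρ + 2 * g ρ = -(G' ρ / ρ) + 2 * g ρ := by ring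
      rw [heq]
      calc |-(G' ρ / ρ) + 2 * g ρ| ≤ |-(G' ρ / ρ)| + |2 * g ρ| := abs_add_le _ _
        _ = |G' ρ / ρ| + 2 * |g ρ| := by rw [abs_neg, abs_mul, abs_two]
        _ ≤ ψ ρ + 2 * ψ ρ := by linarith
        _ = 3 * ψ ρ := by ring
    nlinarith [sq_abs (G'' ρ), sq_abs (G' ρ / ρ), abs_nonneg (G'' ρ), abs_nonneg (G' ρ / ρ),
      mul_self_le_mul_self (abs_nonneg (G'' ρ)) hb2,
      mul_self_le_mul_self (abs_nonneg (G' ρ / ρ)) hb1]
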